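/- Let a : ℕ → ℝ be decreasing with a_n > 0, and define F : ℤ → ℝ by F(n) = a_n for n ≥ 0 and F(n) = 0 for n < 0, and c_k(n) = F(n) - F(n-k). Then for any fixed k ≥ 1 and any n₁ ≥ k, one has ∑_{n ≤ n₁} |c_k(n)|² ≤ 2 ∑_{n=0}^{k-1} a_n². -/

import Mathlib

open Finset

lemma natver (a : ℕ → ℝ) (ha : Antitone a) (hpos : ∀ n, 0 < a n)
    (K N : ℕ) (hK : 1 ≤ K) (hN : K ≤ N) :
    ∑ n ∈ range (N+1), (if n < K then (a n)^2 else (a (n-K) - a n)^2)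
      ≤ 2 * ∑ n ∈ range K, (a n)^2 := by
  have hsplit : range (N+1) = range K ∪ Ico K (N+1) := by
    rw [Finset.range_eq_Ico, Finset.range_eq_Ico, Finset.Ico_union_Ico_eq_Ico (Nat.zero_le _) (by omega)]
  rw [hsplit, Finset.sum_union (Finset.disjoint_left.mpr (by intro x hx hx'; simp only [Finset.mem_range, Finset.mem_Ico] at hx hx'; omega))]
  have h1 : ∑ n ∈ range K, (if n < K then (a n)^2 else (a (n-K) - a n)^2)
      = ∑ n ∈ range K, (a n)^2 := by
    apply Finset.sum_congr rfl; intro n hn; simp [Finset.mem_range.mp hn]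
  have h2 : ∑ n ∈ Ico K (N+1), (if n < K then (a n)^2 else (a (n-K) - a n)^2)
      ≤ ∑ n ∈ Ico K (N+1), ((a (n-K))^2 - (a n)^2) := by
    apply Finset.sum_le_sum; intro n hn
    have hn' := Finset.mem_Ico.mp hn
    rw [if_neg (by omega)]
    have h1 : a n ≤ a (n - K) := ha (by omega)
    have h2 := hpos n
    nlinarith
  have h3 : ∑ n ∈ Ico K (N+1), (a (n-K))^2 = ∑ n ∈ range (N+1-K), (a n)^2 := by
    rw [Finset.sum_Ico_eq_sum_range]
    apply Finset.sum_congr rfl; intro n _; congr 2; omega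
  have h4 : ∑ n ∈ range (N+1-K), (a n)^2
      ≤ ∑ n ∈ range K, (a n)^2 + ∑ n ∈ Ico K (N+1), (a n)^2 := by
    rw [← Finset.sum_union (Finset.disjoint_left.mpr (by intro x hx hx'; simp only [Finset.mem_range, Finset.mem_Ico] at hx hx'; omega))]
    apply Finset.sum_le_sum_of_subset_of_nonneg
    · intro n hn; simp only [Finset.mem_union, Finset.mem_range, Finset.mem_Ico] at *; omega
    · intro n _ _; positivity
  rw [h1]
  have := Finset.sum_sub_distrib (s := Ico K (N+1)) (f := fun n => (a (n-K))^2) (g := fun n => (a n)^2)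
  linarith [h2, h3 ▸ (this ▸ h2)]

theorem stmt7 (a : ℕ → ℝ) (ha : Antitone a) (hpos : ∀ n, 0 < a n)
    (F : ℤ → ℝ) (hF : ∀ n : ℤ, F n = if 0 ≤ n then a n.toNat else 0)
    (c : ℤ → ℤ → ℝ) (hc : ∀ k n, c k n = F n - F (n - k))
    (k : ℤ) (hk : 1 ≤ k) (n₁ : ℤ) (hn₁ : k ≤ n₁) :
    ∑' n : {n : ℤ // n ≤ n₁}, |c k n| ^ 2 ≤ 2 * ∑ n ∈ Finset.range k.toNat, (a n) ^ 2 := by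
  have hczero : ∀ n : ℤ, n < 0 → c k n = 0 := by
    intro n hn
    rw [hc, hF, hF, if_neg (by omega), if_neg (by omega), sub_zero]
  have h1 : ∑' n : {n : ℤ // n ≤ n₁}, |c k (n:ℤ)| ^ 2
      = ∑' n : ℤ, Set.indicator {n : ℤ | n ≤ n₁} (fun n => |c k n| ^ 2) n :=
    (_root_.tsum_subtype {n : ℤ | n ≤ n₁} (fun n => |c k n| ^ 2))
  rw [h1, tsum_eq_sum (s := Finset.Icc 0 n₁) ?h0]
  case h0 =>
    intro n hn
    simp only [Finset.mem_Icc, not_and, not_le] at hn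
    by_cases h : n ≤ n₁
    · rw [Set.indicator_of_mem (show n ∈ {m : ℤ | m ≤ n₁} from h)]
      have : n < 0 := by omega
      rw [hczero n this]; simp
    · exact Set.indicator_of_notMem (show n ∉ {m : ℤ | m ≤ n₁} from h) _
  have h2 : ∑ n ∈ Finset.Icc 0 n₁, Set.indicator {n : ℤ | n ≤ n₁} (fun n => |c k n| ^ 2) n
      = ∑ n ∈ Finset.Icc 0 n₁, |c k n| ^ 2 := by
    apply Finset.sum_congr rfl
    intro n hn
    have := (Finset.mem_Icc.mp hn).2
    exact Set.indicator_of_mem (show n ∈ {m : ℤ | m ≤ n₁} from this) _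
  rw [h2]
  set K := k.toNat with hKdef
  set N := n₁.toNat with hNdef
  have hkK : (K:ℤ) = k := Int.toNat_of_nonneg (by omega)
  have hNI : (N:ℤ) = n₁ := Int.toNat_of_nonneg (by omega)
  have hK1 : 1 ≤ K := by omega
  have hNK : K ≤ N := by omega
  have h3 : ∑ n ∈ Finset.Icc 0 n₁, |c k n| ^ 2
      = ∑ m ∈ Finset.range (N+1), (if m < K then (a m)^2 else (a (m-K) - a m)^2) := by
    refine Finset.sum_nbij' (i := fun n => n.toNat) (j := fun m => (m : ℤ)) ?_ ?_ ?_ ?_ ?_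
    · intro n hn
      simp only [Finset.mem_Icc] at hn
      simp only [Finset.mem_range]; omega
    · intro m hm
      simp only [Finset.mem_range] at hm
      simp only [Finset.mem_Icc]; omega
    · intro n hn
      simp only [Finset.mem_Icc] at hn
      show ((n.toNat : ℤ)) = n
      omega
    · intro m _
      show ((m : ℤ)).toNat = m
      simp
    · intro n hn
      simp only [Finset.mem_Icc] at hn
      rw [sq_abs, hc, hF, hF, if_pos hn.1]
      by_cases hnk : n < k
      · rw [if_neg (by omega), if_pos (by omega : n.toNat < K), sub_zero]
      · rw [if_pos (by omega), if_neg (by omega : ¬ n.toNat < K)]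
        have : (n - k).toNat = n.toNat - K := by omega
        rw [this]
        ring
  rw [h3]
  exact natver a ha hpos K N hK1 hNK
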